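/- arXiv:2312.16588 — 2 statements merged into one kernel-verified Lean document; each statement's English description precedes it below -/
import Mathlib

section
/- Let $\lambda > 0$, $1/2 < p < 1$ and $\varrho > 0$. There exists a constant $C > 0$ such that for all $t \geq 0$, $\int_0^t e^{-\lambda(t^p - \tau^p)}\, \tau^{p-1} (1+\tau)^{-(\varrho+p)}\, d\tau \leq C (1+t)^{-(\varrho+p)}$. -/
open Real MeasureTheory intervalIntegral

private lemma aux0' (r : ℝ) (hr : 0 ≤ r) :
    ∃ M : ℝ, 0 < M ∧ ∀ u : ℝ, 0 ≤ u → Real.exp (-u) * u ^ r ≤ M := by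
  refine ⟨1 + (Nat.factorial (Nat.ceil r) : ℝ), by positivity, fun u hu => ?_⟩
  set n := Nat.ceil r with hn
  rcases le_total u 1 with h1 | h1
  · have h2 : u ^ r ≤ 1 := Real.rpow_le_one hu h1 hr
    have h3 : Real.exp (-u) ≤ 1 := Real.exp_le_one_iff.mpr (by linarith)
    nlinarith [Real.exp_pos (-u), Real.rpow_nonneg hu r,
      (Nat.cast_pos (α := ℝ)).mpr (Nat.factorial_pos n)]
  · have h2 : u ^ r ≤ u ^ (n : ℝ) :=
      Real.rpow_le_rpow_of_exponent_le h1 (Nat.le_ceil r)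
    rw [Real.rpow_natCast] at h2
    have h3 : u ^ n / n.factorial ≤ Real.exp u := by
      calc u ^ n / n.factorial ≤ ∑ i ∈ Finset.range (n + 1), u ^ i / i.factorial := by
            exact Finset.single_le_sum (f := fun i => u ^ i / i.factorial)
              (fun i _ => by positivity) (Finset.self_mem_range_succ n)
        _ ≤ Real.exp u := Real.sum_le_exp_of_nonneg hu (n + 1)
    have h4 : Real.exp (-u) * u ^ n ≤ (n.factorial : ℝ) := by
      have hfac : (0:ℝ) < n.factorial := by positivity
      rw [div_le_iff₀ hfac] at h3
      have := mul_le_mul_of_nonneg_left h3 (Real.exp_pos (-u)).le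
      calc Real.exp (-u) * u ^ n ≤ Real.exp (-u) * (Real.exp u * n.factorial) := this
        _ = (n.factorial : ℝ) := by rw [← mul_assoc, ← Real.exp_add]; simp
    have h5 : Real.exp (-u) * u ^ r ≤ Real.exp (-u) * u ^ n :=
      mul_le_mul_of_nonneg_left h2 (Real.exp_pos (-u)).le
    linarith

private lemma aux1' (c p r : ℝ) (hc : 0 < c) (hp : 0 < p) (hr : 0 ≤ r) :
    ∃ M : ℝ, 0 < M ∧ ∀ t : ℝ, 0 ≤ t → Real.exp (-(c * t ^ p)) * t ^ r ≤ M := by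
  obtain ⟨M, hM, hMb⟩ := aux0' (r / p) (by positivity)
  refine ⟨c ^ (-(r / p)) * M, by positivity, fun t ht => ?_⟩
  have hu : 0 ≤ c * t ^ p := by positivity
  have key := hMb (c * t ^ p) hu
  have hrw : (c * t ^ p) ^ (r / p) = c ^ (r / p) * t ^ r := by
    rw [Real.mul_rpow hc.le (Real.rpow_nonneg ht p), ← Real.rpow_mul ht]
    congr 2
    field_simp
  rw [hrw] at key
  have hcpos : (0:ℝ) < c ^ (r / p) := Real.rpow_pos_of_pos hc _
  have hinv : c ^ (-(r / p)) = (c ^ (r / p))⁻¹ := Real.rpow_neg hc.le _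
  rw [hinv]
  rw [mul_comm (Real.exp (-(c * t ^ p))) (t ^ r)] at *
  calc t ^ r * Real.exp (-(c * t ^ p))
      = (c ^ (r / p))⁻¹ * (c ^ (r / p) * t ^ r * Real.exp (-(c * t ^ p))) := by
        field_simp
    _ ≤ (c ^ (r / p))⁻¹ * M := by
        apply mul_le_mul_of_nonneg_left _ (by positivity)
        calc c ^ (r / p) * t ^ r * Real.exp (-(c * t ^ p))
            = Real.exp (-(c * t ^ p)) * (c ^ (r / p) * t ^ r) := by ring
          _ ≤ M := key

private lemma aux2' (c p q : ℝ) (hc : 0 < c) (hp : 0 < p) (hq : 0 < q) :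
    ∃ A : ℝ, 0 < A ∧ ∀ t : ℝ, 0 ≤ t →
      Real.exp (-(c * t ^ p)) * t ^ p * (1 + t) ^ q ≤ A := by
  obtain ⟨M1, hM1, hM1b⟩ := aux1' c p p hc hp hp.le
  obtain ⟨M2, hM2, hM2b⟩ := aux1' c p (p + q) hc hp (by linarith)
  refine ⟨2 ^ q * (M1 + M2), by positivity, fun t ht => ?_⟩
  have hbase : (1 + t) ^ q ≤ 2 ^ q * (1 + t ^ q) := by
    rcases le_total t 1 with h1 | h1
    · have h2 : (1 + t) ^ q ≤ (2:ℝ) ^ q :=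
        Real.rpow_le_rpow (by linarith) (by linarith) hq.le
      have h3 : (0:ℝ) ≤ t ^ q := Real.rpow_nonneg ht q
      nlinarith [Real.rpow_pos_of_pos (show (0:ℝ) < 2 by norm_num) q]
    · have h2 : (1 + t) ^ q ≤ (2 * t) ^ q :=
        Real.rpow_le_rpow (by linarith) (by linarith) hq.le
      rw [Real.mul_rpow (by norm_num) (by linarith)] at h2
      have h3 : (0:ℝ) < (2:ℝ) ^ q := Real.rpow_pos_of_pos (by norm_num) q
      nlinarith
  have hE : (0:ℝ) ≤ Real.exp (-(c * t ^ p)) * t ^ p := by positivity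
  calc Real.exp (-(c * t ^ p)) * t ^ p * (1 + t) ^ q
      ≤ Real.exp (-(c * t ^ p)) * t ^ p * (2 ^ q * (1 + t ^ q)) :=
        mul_le_mul_of_nonneg_left hbase hE
    _ = 2 ^ q * (Real.exp (-(c * t ^ p)) * t ^ p
          + Real.exp (-(c * t ^ p)) * (t ^ p * t ^ q)) := by ring
    _ ≤ 2 ^ q * (M1 + M2) := by
        have hpq : t ^ p * t ^ q = t ^ (p + q) :=
          (Real.rpow_add' ht (by positivity)).symm
        rw [hpq]
        have := hM1b t ht
        have h2 := hM2b t ht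
        have h2q : (0:ℝ) < (2:ℝ) ^ q := Real.rpow_pos_of_pos (by norm_num) q
        nlinarith

private lemma aux3' (c p q : ℝ) (hc : 0 < c) (hp : 0 < p) (hq : 0 < q) :
    ∃ A : ℝ, 0 < A ∧ ∀ t : ℝ, 0 ≤ t →
      Real.exp (-(c * t ^ p)) * t ^ p ≤ A * (1 + t) ^ (-q) := by
  obtain ⟨A, hA, hAb⟩ := aux2' c p q hc hp hq
  refine ⟨A, hA, fun t ht => ?_⟩
  have h1 : (0:ℝ) < (1 + t) ^ q := Real.rpow_pos_of_pos (by linarith) q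
  rw [Real.rpow_neg (by linarith : (0:ℝ) ≤ 1 + t), ← div_eq_mul_inv, le_div_iff₀ h1]
  exact hAb t ht

/-- for `λ > 0`, `1/2 < p < 1` and `ϱ > 0` there is `C > 0` such that for all
`t ≥ 0`, `∫₀ᵗ e^(-λ(tᵖ-τᵖ)) τ^(p-1) (1+τ)^(-(ϱ+p)) dτ ≤ C (1+t)^(-(ϱ+p))`. -/
theorem decay_convolution_subexp (lam p ϱ : ℝ) (hlam : 0 < lam)
    (hp1 : 1 / 2 < p) (hp2 : p < 1) (hϱ : 0 < ϱ) :
    ∃ C : ℝ, 0 < C ∧ ∀ t : ℝ, 0 ≤ t →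
      (∫ τ in (0 : ℝ)..t,
          Real.exp (-(lam * (t ^ p - τ ^ p))) * τ ^ (p - 1) * (1 + τ) ^ (-(ϱ + p))) ≤
        C * (1 + t) ^ (-(ϱ + p)) := by
  have hp0 : 0 < p := by linarith
  set q : ℝ := ϱ + p with hqdef
  have hq : 0 < q := by positivity
  have hhalf : ((1:ℝ)/2) ^ p < 1 := Real.rpow_lt_one (by norm_num) (by norm_num) hp0
  set c : ℝ := lam * (1 - (1/2:ℝ) ^ p) with hcdef
  have hc : 0 < c := mul_pos hlam (by linarith)
  obtain ⟨A, hA, hAb⟩ := aux3' c p q hc hp0 hq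
  refine ⟨A / p + 2 ^ q / (lam * p), by positivity, fun t ht => ?_⟩
  rcases ht.eq_or_lt with rfl | ht0
  · rw [intervalIntegral.integral_same]
    have : (0:ℝ) < (1 + (0:ℝ)) ^ (-q) := Real.rpow_pos_of_pos (by norm_num) _
    positivity
  -- now 0 < t
  set f : ℝ → ℝ :=
    fun τ => Real.exp (-(lam * (t ^ p - τ ^ p))) * τ ^ (p - 1) * (1 + τ) ^ (-q) with hf
  have hle2 : (0:ℝ) ≤ t / 2 := by linarith
  have hle2' : t / 2 ≤ t := by linarith
  -- integrability of f on [0, t]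
  have hInt : IntervalIntegrable f volume 0 t := by
    have hg : IntervalIntegrable (fun τ : ℝ => τ ^ (p - 1)) volume 0 t :=
      intervalIntegral.intervalIntegrable_rpow' (by linarith)
    apply hg.mono_fun
    · apply Measurable.aestronglyMeasurable
      fun_prop
    · rw [Filter.EventuallyLE, ae_restrict_iff' measurableSet_uIoc]
      filter_upwards with τ hτ
      rw [Set.uIoc_of_le ht0.le] at hτ
      obtain ⟨hτ0, hτt⟩ := hτ
      have hE : Real.exp (-(lam * (t ^ p - τ ^ p))) ≤ 1 := by
        rw [Real.exp_le_one_iff]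
        have : τ ^ p ≤ t ^ p := Real.rpow_le_rpow hτ0.le hτt hp0.le
        nlinarith
      have hS : (1 + τ) ^ (-q) ≤ 1 :=
        Real.rpow_le_one_of_one_le_of_nonpos (by linarith) (by linarith)
      have hR : (0:ℝ) ≤ τ ^ (p - 1) := Real.rpow_nonneg hτ0.le _
      simp only [hf, norm_mul, norm_eq_abs]
      rw [abs_of_nonneg hR, abs_of_nonneg (Real.exp_pos _).le,
        abs_of_nonneg (Real.rpow_nonneg (show (0:ℝ) ≤ 1 + τ by linarith) _)]
      calc Real.exp (-(lam * (t ^ p - τ ^ p))) * τ ^ (p - 1) * (1 + τ) ^ (-q)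
          ≤ Real.exp (-(lam * (t ^ p - τ ^ p))) * τ ^ (p - 1) :=
            mul_le_of_le_one_right (by positivity) hS
        _ ≤ τ ^ (p - 1) := mul_le_of_le_one_left hR hE
  have hsub1 : Set.uIcc (0:ℝ) (t/2) ⊆ Set.uIcc (0:ℝ) t := by
    rw [Set.uIcc_of_le hle2, Set.uIcc_of_le ht0.le]
    exact Set.Icc_subset_Icc le_rfl hle2'
  have hsub2 : Set.uIcc (t/2) t ⊆ Set.uIcc (0:ℝ) t := by
    rw [Set.uIcc_of_le hle2', Set.uIcc_of_le ht0.le]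
    exact Set.Icc_subset_Icc hle2 le_rfl
  have hInt1 : IntervalIntegrable f volume 0 (t/2) := hInt.mono_set hsub1
  have hInt2 : IntervalIntegrable f volume (t/2) t := hInt.mono_set hsub2
  have hsplit : (∫ τ in (0:ℝ)..t, f τ)
      = (∫ τ in (0:ℝ)..(t/2), f τ) + ∫ τ in (t/2)..t, f τ :=
    (intervalIntegral.integral_add_adjacent_intervals hInt1 hInt2).symm
  -- Part A
  have hgint : IntervalIntegrable
      (fun τ : ℝ => Real.exp (-(c * t ^ p)) * τ ^ (p - 1)) volume 0 (t/2) :=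
    (intervalIntegral.intervalIntegrable_rpow' (by linarith)).const_mul _
  have hmonoA : ∀ x ∈ Set.Icc (0:ℝ) (t/2),
      f x ≤ Real.exp (-(c * t ^ p)) * x ^ (p - 1) := by
    intro x hx
    obtain ⟨hx0, hxt⟩ := hx
    have hxp : x ^ p ≤ (1/2:ℝ) ^ p * t ^ p := by
      have h1 : x ^ p ≤ (t/2) ^ p := Real.rpow_le_rpow hx0 hxt hp0.le
      have h2 : (t/2 : ℝ) ^ p = t ^ p * (1/2:ℝ) ^ p := by
        rw [show (t/2 : ℝ) = t * (1/2) by ring,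
          Real.mul_rpow ht0.le (by norm_num)]
      linarith [h2 ▸ h1]
    have hE : Real.exp (-(lam * (t ^ p - x ^ p))) ≤ Real.exp (-(c * t ^ p)) := by
      apply Real.exp_le_exp.mpr
      rw [hcdef]
      nlinarith
    have hS : (1 + x) ^ (-q) ≤ 1 :=
      Real.rpow_le_one_of_one_le_of_nonpos (by linarith) (by linarith)
    have hR : (0:ℝ) ≤ x ^ (p - 1) := Real.rpow_nonneg hx0 _
    calc f x ≤ Real.exp (-(lam * (t ^ p - x ^ p))) * x ^ (p - 1) :=
          mul_le_of_le_one_right (by positivity) hS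
      _ ≤ Real.exp (-(c * t ^ p)) * x ^ (p - 1) :=
          mul_le_mul_of_nonneg_right hE hR
  have hPartA : (∫ τ in (0:ℝ)..(t/2), f τ) ≤ (A / p) * (1 + t) ^ (-q) := by
    have h1 : (∫ τ in (0:ℝ)..(t/2), f τ)
        ≤ ∫ τ in (0:ℝ)..(t/2), Real.exp (-(c * t ^ p)) * τ ^ (p - 1) :=
      intervalIntegral.integral_mono_on hle2 hInt1 hgint hmonoA
    have h2 : (∫ τ in (0:ℝ)..(t/2), Real.exp (-(c * t ^ p)) * τ ^ (p - 1))
        = Real.exp (-(c * t ^ p)) * ((t/2) ^ p / p) := by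
      rw [intervalIntegral.integral_const_mul,
        integral_rpow (Or.inl (by linarith : (-1:ℝ) < p - 1))]
      congr 1
      rw [show p - 1 + 1 = p by ring, Real.zero_rpow (ne_of_gt hp0)]
      ring
    have h3 : (t/2 : ℝ) ^ p ≤ t ^ p :=
      Real.rpow_le_rpow hle2 (by linarith) hp0.le
    have h4 : Real.exp (-(c * t ^ p)) * ((t/2) ^ p / p)
        ≤ Real.exp (-(c * t ^ p)) * (t ^ p / p) := by
      apply mul_le_mul_of_nonneg_left _ (Real.exp_pos _).le
      gcongr
    have h5 := hAb t ht0.le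
    calc (∫ τ in (0:ℝ)..(t/2), f τ)
        ≤ Real.exp (-(c * t ^ p)) * ((t/2) ^ p / p) := h2 ▸ h1
      _ ≤ Real.exp (-(c * t ^ p)) * (t ^ p / p) := h4
      _ = (Real.exp (-(c * t ^ p)) * t ^ p) / p := by ring
      _ ≤ (A * (1 + t) ^ (-q)) / p := by gcongr
      _ = (A / p) * (1 + t) ^ (-q) := by ring
  -- Part B
  have huIcc2 : Set.uIcc (t/2) t = Set.Icc (t/2) t := Set.uIcc_of_le hle2'
  have hBint : IntervalIntegrable
      (fun τ : ℝ => Real.exp (-(lam * (t ^ p - τ ^ p))) * τ ^ (p - 1)) volume (t/2) t := by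
    apply ContinuousOn.intervalIntegrable
    rw [huIcc2]
    intro x hx
    have hx0 : x ≠ 0 := ne_of_gt (lt_of_lt_of_le (by linarith) hx.1)
    exact ((Real.continuous_exp.comp ((continuous_const.mul (continuous_const.sub
        (continuous_id.rpow_const (fun _ => Or.inr hp0.le)))).neg)).continuousAt.continuousWithinAt.mul
      ((Real.continuousAt_rpow_const x (p-1) (Or.inl hx0)).continuousWithinAt))
  have hmonoB : ∀ x ∈ Set.Icc (t/2) t,
      f x ≤ (1 + t/2) ^ (-q) * (Real.exp (-(lam * (t ^ p - x ^ p))) * x ^ (p - 1)) := by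
    intro x hx
    obtain ⟨hx1, hx2⟩ := hx
    have hx0 : (0:ℝ) ≤ x := le_trans hle2 hx1
    have hS : (1 + x) ^ (-q) ≤ (1 + t/2) ^ (-q) := by
      rw [Real.rpow_neg (by linarith), Real.rpow_neg (by linarith)]
      have hXY : (1 + t/2) ^ q ≤ (1 + x) ^ q :=
        Real.rpow_le_rpow (by linarith) (by linarith) hq.le
      have hX : (0:ℝ) < (1 + t/2) ^ q := Real.rpow_pos_of_pos (by linarith) q
      gcongr
    have hER : (0:ℝ) ≤ Real.exp (-(lam * (t ^ p - x ^ p))) * x ^ (p - 1) := by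
      positivity
    calc f x = Real.exp (-(lam * (t ^ p - x ^ p))) * x ^ (p - 1) * (1 + x) ^ (-q) := rfl
      _ ≤ Real.exp (-(lam * (t ^ p - x ^ p))) * x ^ (p - 1) * (1 + t/2) ^ (-q) :=
          mul_le_mul_of_nonneg_left hS hER
      _ = (1 + t/2) ^ (-q) * (Real.exp (-(lam * (t ^ p - x ^ p))) * x ^ (p - 1)) := by
          ring
  have hFTC : (∫ τ in (t/2)..t, Real.exp (lam * τ ^ p) * τ ^ (p - 1))
      = (Real.exp (lam * t ^ p) - Real.exp (lam * (t/2) ^ p)) / (lam * p) := by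
    have hcont : ContinuousOn (fun τ : ℝ => Real.exp (lam * τ ^ p) * τ ^ (p - 1))
        (Set.uIcc (t/2) t) := by
      rw [huIcc2]
      intro x hx
      have hx0 : x ≠ 0 := ne_of_gt (lt_of_lt_of_le (by linarith) hx.1)
      exact ((Real.continuous_exp.comp (continuous_const.mul
          (continuous_id.rpow_const (fun _ => Or.inr hp0.le)))).continuousAt.continuousWithinAt.mul
        ((Real.continuousAt_rpow_const x (p-1) (Or.inl hx0)).continuousWithinAt))
    have key : ∀ x ∈ Set.uIcc (t/2) t,
        HasDerivAt (fun τ : ℝ => Real.exp (lam * τ ^ p) / (lam * p))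
          (Real.exp (lam * x ^ p) * x ^ (p - 1)) x := by
      intro x hx
      rw [huIcc2] at hx
      have hx0 : x ≠ 0 := ne_of_gt (lt_of_lt_of_le (by linarith) hx.1)
      have h1 : HasDerivAt (fun τ : ℝ => τ ^ p) (p * x ^ (p - 1)) x :=
        Real.hasDerivAt_rpow_const (Or.inl hx0)
      have h2 := (h1.const_mul lam).exp
      have h3 := h2.div_const (lam * p)
      refine h3.congr_deriv ?_
      rw [div_eq_iff (by positivity)]
      ring
    rw [intervalIntegral.integral_eq_sub_of_hasDerivAt key hcont.intervalIntegrable]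
    ring
  have hBval : (∫ τ in (t/2)..t, Real.exp (-(lam * (t ^ p - τ ^ p))) * τ ^ (p - 1))
      ≤ 1 / (lam * p) := by
    have hsss : ∀ τ : ℝ, Real.exp (-(lam * (t ^ p - τ ^ p))) * τ ^ (p - 1)
        = Real.exp (-(lam * t ^ p)) * (Real.exp (lam * τ ^ p) * τ ^ (p - 1)) := by
      intro τ
      rw [← mul_assoc, ← Real.exp_add,
        show -(lam * t ^ p) + lam * τ ^ p = -(lam * (t ^ p - τ ^ p)) by ring]
    simp only [hsss]
    rw [intervalIntegral.integral_const_mul, hFTC]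
    have hprod : Real.exp (-(lam * t ^ p)) * Real.exp (lam * t ^ p) = 1 := by
      rw [← Real.exp_add]; simp
    have hlp : (0:ℝ) < lam * p := by positivity
    rw [← mul_div_assoc, div_le_div_iff₀ hlp hlp]
    have hpos2 : (0:ℝ) < Real.exp (lam * (t/2) ^ p) := Real.exp_pos _
    nlinarith [hprod, mul_pos (mul_pos (Real.exp_pos (-(lam * t ^ p))) hpos2) hlp]
  have hPartB : (∫ τ in (t/2)..t, f τ) ≤ (2 ^ q / (lam * p)) * (1 + t) ^ (-q) := by
    have h1 : (∫ τ in (t/2)..t, f τ)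
        ≤ ∫ τ in (t/2)..t,
            (1 + t/2) ^ (-q) * (Real.exp (-(lam * (t ^ p - τ ^ p))) * τ ^ (p - 1)) :=
      intervalIntegral.integral_mono_on hle2' hInt2 (hBint.const_mul _) hmonoB
    rw [intervalIntegral.integral_const_mul] at h1
    have hSc : (0:ℝ) ≤ (1 + t/2) ^ (-q) := Real.rpow_nonneg (by linarith) _
    have h2 : (1 + t/2) ^ (-q)
        * (∫ τ in (t/2)..t, Real.exp (-(lam * (t ^ p - τ ^ p))) * τ ^ (p - 1))
        ≤ (1 + t/2) ^ (-q) * (1 / (lam * p)) :=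
      mul_le_mul_of_nonneg_left hBval hSc
    have hq2 : (1 + t/2) ^ (-q) ≤ 2 ^ q * (1 + t) ^ (-q) := by
      have hXY : (1 + t) ^ q ≤ 2 ^ q * (1 + t/2) ^ q := by
        rw [← Real.mul_rpow (by norm_num) (by linarith)]
        exact Real.rpow_le_rpow (by linarith) (by linarith) hq.le
      have hX : (0:ℝ) < (1 + t/2) ^ q := Real.rpow_pos_of_pos (by linarith) q
      have hY : (0:ℝ) < (1 + t) ^ q := Real.rpow_pos_of_pos (by linarith) q
      rw [Real.rpow_neg (by linarith), Real.rpow_neg (by linarith)]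
      calc ((1 + t/2) ^ q)⁻¹ = ((1 + t) ^ q)⁻¹ * ((1 + t) ^ q * ((1 + t/2) ^ q)⁻¹) := by
            field_simp
        _ ≤ ((1 + t) ^ q)⁻¹ * ((2 ^ q * (1 + t/2) ^ q) * ((1 + t/2) ^ q)⁻¹) := by
            apply mul_le_mul_of_nonneg_left _ (by positivity)
            exact mul_le_mul_of_nonneg_right hXY (by positivity)
        _ = 2 ^ q * ((1 + t) ^ q)⁻¹ := by
            field_simp
    have hlp : (0:ℝ) < lam * p := by positivity
    calc (∫ τ in (t/2)..t, f τ)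
        ≤ (1 + t/2) ^ (-q) * (1 / (lam * p)) := le_trans h1 h2
      _ ≤ (2 ^ q * (1 + t) ^ (-q)) * (1 / (lam * p)) :=
          mul_le_mul_of_nonneg_right hq2 (by positivity)
      _ = (2 ^ q / (lam * p)) * (1 + t) ^ (-q) := by ring
  calc (∫ τ in (0:ℝ)..t, f τ)
      = (∫ τ in (0:ℝ)..(t/2), f τ) + ∫ τ in (t/2)..t, f τ := hsplit
    _ ≤ (A / p) * (1 + t) ^ (-q) + (2 ^ q / (lam * p)) * (1 + t) ^ (-q) :=
        add_le_add hPartA hPartB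
    _ = (A / p + 2 ^ q / (lam * p)) * (1 + t) ^ (-q) := by ring
end

section
/- Let $\lambda > 0$, $1/2 < p < 1$ and $1 < \varrho < 3/2$. There exists a constant $C > 0$ such that for all $t \geq 0$, $\int_0^t e^{-\lambda(t^p - \tau^p)} (1+\tau)^{-(1+\varrho)}\, d\tau \leq C (1+t)^{-(\varrho+p)}$. -/
open Real MeasureTheory intervalIntegral

-- tangent line inequality for concave rpow
private lemma tangent_rpow {p : ℝ} (hp0 : 0 < p) (hp1 : p ≤ 1) {τ t : ℝ} (hτ : 0 ≤ τ)
    (hτt : τ ≤ t) (ht : 0 < t) : p * t ^ (p - 1) * (t - τ) ≤ t ^ p - τ ^ p := by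
  have hs : -1 ≤ τ / t - 1 := by
    have : 0 ≤ τ / t := div_nonneg hτ ht.le
    linarith
  have hB := rpow_one_add_le_one_add_mul_self hs hp0.le hp1
  rw [add_sub_cancel] at hB
  -- hB : (τ/t)^p ≤ 1 + p*(τ/t - 1)
  have hdiv : (τ / t) ^ p = τ ^ p / t ^ p := Real.div_rpow hτ ht.le p
  rw [hdiv] at hB
  have htp : (0:ℝ) < t ^ p := Real.rpow_pos_of_pos ht p
  have hAB : t ^ p = t ^ (p - 1) * t := by
    rw [← Real.rpow_add_one ht.ne' (p - 1)]; ring_nf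
  have h2 : τ ^ p ≤ (1 + p * (τ / t - 1)) * t ^ p := by
    rw [div_le_iff₀ htp] at hB; linarith
  have h3 : (1 + p * (τ / t - 1)) * t ^ p = t ^ p + p * (τ - t) * t ^ (p - 1) := by
    rw [hAB]; field_simp
  nlinarith [h2, h3]

private lemma exp_conv_le {c a b : ℝ} (hc : 0 < c) :
    ∫ τ in a..b, Real.exp (-(c * (b - τ))) ≤ 1 / c := by
  have h1 : ∀ τ : ℝ, Real.exp (-(c * (b - τ))) = Real.exp (-(c * b)) * Real.exp (c * τ) := by
    intro τ; rw [← Real.exp_add]; ring_nf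
  simp_rw [h1]
  rw [intervalIntegral.integral_const_mul]
  have h2 : (∫ τ in a..b, Real.exp (c * τ)) = c⁻¹ * (Real.exp (c * b) - Real.exp (c * a)) := by
    rw [intervalIntegral.integral_comp_mul_left (fun x => Real.exp x) hc.ne', integral_exp,
      smul_eq_mul]
  rw [h2]
  have h3 : Real.exp (-(c * b)) * (c⁻¹ * (Real.exp (c * b) - Real.exp (c * a)))
      = c⁻¹ * (1 - Real.exp (c * a - c * b)) := by
    rw [sub_eq_add_neg (c*a), Real.exp_add]
    have h0 : Real.exp (-(c * b)) * Real.exp (c * b) = 1 := by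
      rw [← Real.exp_add]; simp
    linear_combination c⁻¹ * h0
  rw [h3, one_div]
  have h4 : 0 < Real.exp (c * a - c * b) := Real.exp_pos _
  have h5 : 0 < c⁻¹ := by positivity
  nlinarith

private lemma pow_int_le {s a b : ℝ} (hs : 0 < s) (ha : 0 ≤ a) (hab : a ≤ b) :
    ∫ τ in a..b, (1 + τ) ^ (-(1 + s)) ≤ 1 / s := by
  have h1 : (∫ τ in a..b, (1 + τ) ^ (-(1 + s)))
      = ∫ u in (1 + a)..(1 + b), u ^ (-(1 + s)) :=
    (intervalIntegral.integral_comp_add_left (fun u => u ^ (-(1 + s))) 1)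
  rw [h1, integral_rpow]
  · have he : -(1 + s) + 1 = -s := by ring
    rw [he]
    have h1a : (1:ℝ) ≤ 1 + a := by linarith
    have h1b : (1:ℝ) ≤ 1 + b := by linarith
    have hb0 : (0:ℝ) ≤ (1 + b) ^ (-s) := Real.rpow_nonneg (by linarith) _
    have ha1 : (1 + a) ^ (-s) ≤ 1 := Real.rpow_le_one_of_one_le_of_nonpos h1a (by linarith)
    have hrw : ((1 + b) ^ (-s) - (1 + a) ^ (-s)) / (-s)
        = ((1 + a) ^ (-s) - (1 + b) ^ (-s)) / s := by
      ring
    rw [hrw, div_le_div_iff₀ hs hs]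
    nlinarith
  · refine Or.inr ⟨?_, ?_⟩
    · intro h
      have hs0 : s = 0 := by linarith
      exact absurd hs0 hs.ne'
    · rw [Set.uIcc_of_le (by linarith : (1:ℝ) + a ≤ 1 + b)]
      rintro ⟨h0, -⟩
      linarith

private lemma exp_decay_poly {c p q : ℝ} (hc : 0 < c) (hp : 1 / 2 < p) (hp2 : p < 1)
    (hq0 : 0 < q) (hq : q + p ≤ 5 / 2) :
    ∃ C1 : ℝ, 0 < C1 ∧ ∀ t : ℝ, 0 ≤ t →
      Real.exp (-(c * t ^ p)) ≤ C1 * (1 + t) ^ (-(q + p)) := by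
  refine ⟨(5 / c) ^ 5 * 2 ^ ((5:ℝ)/2) + 2 ^ ((5:ℝ)/2), by positivity, ?_⟩
  intro t ht
  have h1t : (0:ℝ) < 1 + t := by linarith
  have hpow : (0:ℝ) < (1 + t) ^ (q + p) := Real.rpow_pos_of_pos h1t _
  rw [Real.rpow_neg h1t.le, ← div_eq_mul_inv, le_div_iff₀ hpow]
  rcases le_or_gt t 1 with h1 | h1
  · have he : Real.exp (-(c * t ^ p)) ≤ 1 := by
      rw [Real.exp_le_one_iff]
      have : (0:ℝ) ≤ t ^ p := Real.rpow_nonneg ht p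
      nlinarith
    have hb : (1 + t) ^ (q + p) ≤ 2 ^ ((5:ℝ)/2) := by
      calc (1 + t) ^ (q + p) ≤ (2:ℝ) ^ (q + p) :=
            Real.rpow_le_rpow (by linarith) (by linarith) (by linarith)
        _ ≤ (2:ℝ) ^ ((5:ℝ)/2) := Real.rpow_le_rpow_of_exponent_le one_le_two hq
    have h0 : (0:ℝ) < (5 / c) ^ 5 * 2 ^ ((5:ℝ)/2) := by positivity
    nlinarith
  · -- t ≥ 1
    have ht0 : (0:ℝ) < t := by linarith
    have htp : (0:ℝ) < t ^ p := Real.rpow_pos_of_pos ht0 p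
    -- exp lower bound
    have hx : (0:ℝ) ≤ c * t ^ p / 5 := by positivity
    have h5 : (c * t ^ p / 5) ^ (5:ℕ) ≤ Real.exp (c * t ^ p) := by
      have hb : c * t ^ p / 5 ≤ Real.exp (c * t ^ p / 5) := by
        have := Real.add_one_le_exp (c * t ^ p / 5); linarith
      calc (c * t ^ p / 5) ^ (5:ℕ) ≤ (Real.exp (c * t ^ p / 5)) ^ (5:ℕ) :=
            pow_le_pow_left₀ hx hb 5
        _ = Real.exp (c * t ^ p) := by
            rw [← Real.exp_nat_mul]
            congr 1
            push_cast
            ring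
    have hexp : Real.exp (-(c * t ^ p)) ≤ ((c * t ^ p / 5) ^ (5:ℕ))⁻¹ := by
      rw [Real.exp_neg]
      exact inv_anti₀ (by positivity) h5
    have hbase : (1 + t) ^ (q + p) ≤ 2 ^ ((5:ℝ)/2) * t ^ ((5:ℝ)/2) := by
      calc (1 + t) ^ (q + p) ≤ (2 * t) ^ (q + p) :=
            Real.rpow_le_rpow h1t.le (by linarith) (by linarith)
        _ ≤ (2 * t) ^ ((5:ℝ)/2) :=
            Real.rpow_le_rpow_of_exponent_le (by linarith) hq
        _ = 2 ^ ((5:ℝ)/2) * t ^ ((5:ℝ)/2) := Real.mul_rpow (by norm_num) ht0.le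
    have hkey : t ^ ((5:ℝ)/2) ≤ (t ^ p) ^ (5:ℕ) := by
      have : (t ^ p) ^ (5:ℕ) = t ^ (p * 5) := by
        rw [← Real.rpow_natCast (t ^ p) 5, ← Real.rpow_mul ht0.le]; norm_num
      rw [this]
      exact Real.rpow_le_rpow_of_exponent_le h1.le (by linarith)
    have hc5 : ((c * t ^ p / 5) ^ (5:ℕ))⁻¹ = (5 / c) ^ 5 * ((t ^ p) ^ (5:ℕ))⁻¹ := by
      have hcn : c ≠ 0 := hc.ne'
      have htn : t ^ p ≠ 0 := htp.ne'
      field_simp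
    calc Real.exp (-(c * t ^ p)) * (1 + t) ^ (q + p)
        ≤ ((c * t ^ p / 5) ^ (5:ℕ))⁻¹ * (2 ^ ((5:ℝ)/2) * t ^ ((5:ℝ)/2)) := by
          apply mul_le_mul hexp hbase (by positivity) (by positivity)
      _ = (5 / c) ^ 5 * 2 ^ ((5:ℝ)/2) * (t ^ ((5:ℝ)/2) / (t ^ p) ^ (5:ℕ)) := by
          rw [hc5]; ring
      _ ≤ (5 / c) ^ 5 * 2 ^ ((5:ℝ)/2) * 1 := by
          apply mul_le_mul_of_nonneg_left _ (by positivity)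
          rw [div_le_one (by positivity)]
          exact hkey
      _ ≤ (5 / c) ^ 5 * 2 ^ ((5:ℝ)/2) + 2 ^ ((5:ℝ)/2) := by
          have h2 : (0:ℝ) < 2 ^ ((5:ℝ)/2) := by positivity
          nlinarith

/-- for `λ > 0`, `1/2 < p < 1` and `1 < ϱ < 3/2` there is `C > 0` such that
for all `t ≥ 0`, `∫₀ᵗ e^(-λ(tᵖ-τᵖ)) (1+τ)^(-(1+ϱ)) dτ ≤ C (1+t)^(-(ϱ+p))`. -/
theorem decay_convolution_subexp' (lam p ϱ : ℝ) (hlam : 0 < lam)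
    (hp1 : 1 / 2 < p) (hp2 : p < 1) (hϱ1 : 1 < ϱ) (hϱ2 : ϱ < 3 / 2) :
    ∃ C : ℝ, 0 < C ∧ ∀ t : ℝ, 0 ≤ t →
      (∫ τ in (0 : ℝ)..t, Real.exp (-(lam * (t ^ p - τ ^ p))) * (1 + τ) ^ (-(1 + ϱ))) ≤
        C * (1 + t) ^ (-(ϱ + p)) := by
  have hp0 : 0 < p := by linarith
  have h2p : (2:ℝ) ^ (-p) < 1 :=
    Real.rpow_lt_one_of_one_lt_of_neg one_lt_two (by linarith)
  have h2p0 : (0:ℝ) < 2 ^ (-p) := Real.rpow_pos_of_pos two_pos _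
  set c : ℝ := lam * (1 - 2 ^ (-p)) with hc_def
  have hc : 0 < c := by
    apply mul_pos hlam; linarith
  obtain ⟨C1, hC1, hD⟩ := exp_decay_poly hc hp1 hp2 (by linarith : (0:ℝ) < ϱ)
    (by linarith : ϱ + p ≤ 5 / 2)
  refine ⟨C1 / ϱ + 2 ^ (1 + ϱ) / (lam * p), by positivity, ?_⟩
  intro t ht
  rcases eq_or_lt_of_le ht with rfl | ht0
  · rw [intervalIntegral.integral_same]
    positivity
  have h1t : (0:ℝ) < 1 + t := by linarith
  set g : ℝ → ℝ := fun τ => Real.exp (-(lam * (t ^ p - τ ^ p))) * (1 + τ) ^ (-(1 + ϱ))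
    with hg_def
  -- continuity of g on [0, t]
  have hcont : ContinuousOn g (Set.Icc 0 t) := by
    apply ContinuousOn.mul
    · have c1 : Continuous fun τ : ℝ => τ ^ p := Real.continuous_rpow_const hp0.le
      exact (Real.continuous_exp.comp
        ((continuous_const.mul (continuous_const.sub c1)).neg)).continuousOn
    · apply ContinuousOn.rpow_const (continuous_const.add continuous_id').continuousOn
      intro x hx
      exact Or.inl (by intro h; simp only [Pi.add_apply] at h; nlinarith [hx.1])
  have hsub1 : Set.uIcc 0 (t/2) ⊆ Set.Icc 0 t := by
    rw [Set.uIcc_of_le (by linarith)]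
    exact Set.Icc_subset_Icc le_rfl (by linarith)
  have hsub2 : Set.uIcc (t/2) t ⊆ Set.Icc 0 t := by
    rw [Set.uIcc_of_le (by linarith)]
    exact Set.Icc_subset_Icc (by linarith) le_rfl
  have hint1 : IntervalIntegrable g volume 0 (t/2) := (hcont.mono hsub1).intervalIntegrable
  have hint2 : IntervalIntegrable g volume (t/2) t := (hcont.mono hsub2).intervalIntegrable
  have hsplit : (∫ τ in (0:ℝ)..t, g τ)
      = (∫ τ in (0:ℝ)..(t/2), g τ) + ∫ τ in (t/2)..t, g τ :=
    (intervalIntegral.integral_add_adjacent_intervals hint1 hint2).symm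
  -- ### Bound on [0, t/2]
  have hhalf : lam * (t ^ p - (t/2) ^ p) = c * t ^ p := by
    rw [hc_def, Real.div_rpow ht (by norm_num : (0:ℝ) ≤ 2),
      Real.rpow_neg (by norm_num : (0:ℝ) ≤ 2)]
    have h2pp : (0:ℝ) < (2:ℝ) ^ p := Real.rpow_pos_of_pos two_pos _
    field_simp
  have hcontm : ContinuousOn (fun τ : ℝ => Real.exp (-(c * t ^ p)) * (1 + τ) ^ (-(1 + ϱ)))
      (Set.uIcc 0 (t/2)) := by
    apply ContinuousOn.mul continuousOn_const
    apply ContinuousOn.rpow_const (continuous_const.add continuous_id').continuousOn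
    intro x hx
    have hxx := hsub1 hx
    exact Or.inl (by intro h; simp only [Pi.add_apply] at h; nlinarith [hxx.1])
  have hb1 : (∫ τ in (0:ℝ)..(t/2), g τ)
      ≤ Real.exp (-(c * t ^ p)) * (1/ϱ) := by
    have hmono : ∀ τ ∈ Set.Icc (0:ℝ) (t/2),
        g τ ≤ Real.exp (-(c * t ^ p)) * (1 + τ) ^ (-(1 + ϱ)) := by
      intro τ hτ
      have h1 : τ ^ p ≤ (t/2) ^ p := Real.rpow_le_rpow hτ.1 hτ.2 hp0.le
      have h2 : Real.exp (-(lam * (t ^ p - τ ^ p))) ≤ Real.exp (-(c * t ^ p)) := by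
        rw [Real.exp_le_exp, ← hhalf]
        nlinarith
      exact mul_le_mul_of_nonneg_right h2 (Real.rpow_nonneg (by nlinarith [hτ.1]) _)
    calc (∫ τ in (0:ℝ)..(t/2), g τ)
        ≤ ∫ τ in (0:ℝ)..(t/2), Real.exp (-(c * t ^ p)) * (1 + τ) ^ (-(1 + ϱ)) :=
          intervalIntegral.integral_mono_on (by linarith) hint1
            hcontm.intervalIntegrable hmono
      _ = Real.exp (-(c * t ^ p)) * ∫ τ in (0:ℝ)..(t/2), (1 + τ) ^ (-(1 + ϱ)) :=
          intervalIntegral.integral_const_mul _ _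
      _ ≤ Real.exp (-(c * t ^ p)) * (1/ϱ) := by
          apply mul_le_mul_of_nonneg_left _ (Real.exp_nonneg _)
          exact pow_int_le (by linarith) le_rfl (by linarith)
  -- ### Bound on [t/2, t]
  set cc : ℝ := lam * p * t ^ (p - 1) with hcc_def
  have htp1 : (0:ℝ) < t ^ (p - 1) := Real.rpow_pos_of_pos ht0 _
  have hcc : 0 < cc := by positivity
  have hb2 : (∫ τ in (t/2)..t, g τ)
      ≤ (1 + t/2) ^ (-(1 + ϱ)) * (1/cc) := by
    have hmono : ∀ τ ∈ Set.Icc (t/2) t,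
        g τ ≤ (1 + t/2) ^ (-(1 + ϱ)) * Real.exp (-(cc * (t - τ))) := by
      intro τ hτ
      have hτ0 : 0 ≤ τ := by linarith [hτ.1]
      have htan := tangent_rpow hp0 hp2.le hτ0 hτ.2 ht0
      have h2 : Real.exp (-(lam * (t ^ p - τ ^ p))) ≤ Real.exp (-(cc * (t - τ))) := by
        rw [Real.exp_le_exp, hcc_def]
        nlinarith
      have h3 : (1 + τ) ^ (-(1 + ϱ)) ≤ (1 + t/2) ^ (-(1 + ϱ)) :=
        Real.rpow_le_rpow_of_nonpos (by linarith) (by linarith [hτ.1]) (by linarith)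
      calc g τ ≤ Real.exp (-(cc * (t - τ))) * (1 + t/2) ^ (-(1 + ϱ)) :=
            mul_le_mul h2 h3 (Real.rpow_nonneg (by linarith) _) (Real.exp_nonneg _)
        _ = (1 + t/2) ^ (-(1 + ϱ)) * Real.exp (-(cc * (t - τ))) := by ring
    calc (∫ τ in (t/2)..t, g τ)
        ≤ ∫ τ in (t/2)..t, (1 + t/2) ^ (-(1 + ϱ)) * Real.exp (-(cc * (t - τ))) :=
          intervalIntegral.integral_mono_on (by linarith) hint2
            ((continuous_const.mul (Real.continuous_exp.comp
              ((continuous_const.mul (continuous_const.sub continuous_id')).neg))).intervalIntegrable _ _)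
            hmono
      _ = (1 + t/2) ^ (-(1 + ϱ)) * ∫ τ in (t/2)..t, Real.exp (-(cc * (t - τ))) :=
          intervalIntegral.integral_const_mul _ _
      _ ≤ (1 + t/2) ^ (-(1 + ϱ)) * (1/cc) := by
          apply mul_le_mul_of_nonneg_left _ (Real.rpow_nonneg (by linarith) _)
          exact exp_conv_le hcc
  -- ### combine
  have hD1 : Real.exp (-(c * t ^ p)) * (1/ϱ) ≤ C1 / ϱ * (1 + t) ^ (-(ϱ + p)) := by
    have := hD t ht
    have h1 : Real.exp (-(c * t ^ p)) * (1/ϱ) ≤ C1 * (1 + t) ^ (-(ϱ + p)) * (1/ϱ) :=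
      mul_le_mul_of_nonneg_right this (by positivity)
    calc Real.exp (-(c * t ^ p)) * (1/ϱ) ≤ C1 * (1 + t) ^ (-(ϱ + p)) * (1/ϱ) := h1
      _ = C1 / ϱ * (1 + t) ^ (-(ϱ + p)) := by ring
  have hD2 : (1 + t/2) ^ (-(1 + ϱ)) * (1/cc)
      ≤ 2 ^ (1 + ϱ) / (lam * p) * (1 + t) ^ (-(ϱ + p)) := by
    have hA : (1 + t/2) ^ (-(1 + ϱ)) ≤ ((1 + t)/2) ^ (-(1 + ϱ)) :=
      Real.rpow_le_rpow_of_nonpos (by linarith) (by linarith) (by linarith)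
    have hB : ((1 + t)/2) ^ (-(1 + ϱ)) = (1 + t) ^ (-(1 + ϱ)) * 2 ^ (1 + ϱ) := by
      rw [Real.div_rpow h1t.le (by norm_num : (0:ℝ) ≤ 2),
        Real.rpow_neg (by norm_num : (0:ℝ) ≤ 2), div_eq_mul_inv, inv_inv]
    have hCle : t ^ (1 - p) ≤ (1 + t) ^ (1 - p) :=
      Real.rpow_le_rpow ht (by linarith) (by linarith)
    have hinv : (1:ℝ)/cc = t ^ (1 - p) / (lam * p) := by
      rw [hcc_def, show (1:ℝ) - p = -(p - 1) by ring, Real.rpow_neg ht]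
      field_simp
    have hmerge : (1 + t) ^ (-(1 + ϱ)) * (1 + t) ^ (1 - p) = (1 + t) ^ (-(ϱ + p)) := by
      rw [← Real.rpow_add h1t]
      congr 1
      ring
    have hpos1 : (0:ℝ) ≤ (1 + t) ^ (-(1 + ϱ)) := Real.rpow_nonneg h1t.le _
    have hpos2 : (0:ℝ) ≤ 2 ^ (1 + ϱ) := Real.rpow_nonneg (by norm_num) _
    calc (1 + t/2) ^ (-(1 + ϱ)) * (1/cc)
        ≤ (1 + t) ^ (-(1 + ϱ)) * 2 ^ (1 + ϱ) * (t ^ (1 - p) / (lam * p)) := by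
          rw [hinv]
          apply mul_le_mul_of_nonneg_right (hA.trans hB.le) (by positivity)
      _ ≤ (1 + t) ^ (-(1 + ϱ)) * 2 ^ (1 + ϱ) * ((1 + t) ^ (1 - p) / (lam * p)) := by
          apply mul_le_mul_of_nonneg_left _ (by positivity)
          exact div_le_div_of_nonneg_right hCle (by positivity)
      _ = 2 ^ (1 + ϱ) / (lam * p) * ((1 + t) ^ (-(1 + ϱ)) * (1 + t) ^ (1 - p)) := by ring
      _ = 2 ^ (1 + ϱ) / (lam * p) * (1 + t) ^ (-(ϱ + p)) := by rw [hmerge]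
  calc (∫ τ in (0:ℝ)..t, g τ)
      = (∫ τ in (0:ℝ)..(t/2), g τ) + ∫ τ in (t/2)..t, g τ := hsplit
    _ ≤ Real.exp (-(c * t ^ p)) * (1/ϱ) + (1 + t/2) ^ (-(1 + ϱ)) * (1/cc) :=
        add_le_add hb1 hb2
    _ ≤ C1 / ϱ * (1 + t) ^ (-(ϱ + p)) + 2 ^ (1 + ϱ) / (lam * p) * (1 + t) ^ (-(ϱ + p)) :=
        add_le_add hD1 hD2
    _ = (C1 / ϱ + 2 ^ (1 + ϱ) / (lam * p)) * (1 + t) ^ (-(ϱ + p)) := by ring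
end
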